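/- Let n ≥ 1, k ≥ 1 and let d_1, …, d_k ∈ ℝ^n. Then min_{‖h‖=1} max_{1≤i≤k} ⟨d_i, h⟩ ≥ 0 if and only if 0 belongs to the convex hull conv{d_1, …, d_k}. -/

import Mathlib

open scoped RealInnerProductSpace

/-- `min_{‖h‖=1} max_i ⟨d_i, h⟩ ≥ 0` iff `0 ∈ conv{d₁, …, d_k}`. -/
theorem stmt1 (n k : ℕ) (hn : 1 ≤ n) (hk : 1 ≤ k)
    (d : Fin k → EuclideanSpace ℝ (Fin n)) :
    0 ≤ sInf {r : ℝ | ∃ h : EuclideanSpace ℝ (Fin n), ‖h‖ = 1 ∧ r = ⨆ i, ⟪d i, h⟫} ↔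
      (0 : EuclideanSpace ℝ (Fin n)) ∈ convexHull ℝ (Set.range d) := by
  haveI : Nonempty (Fin k) := ⟨⟨0, hk⟩⟩
  set S := {r : ℝ | ∃ h : EuclideanSpace ℝ (Fin n), ‖h‖ = 1 ∧ r = ⨆ i, ⟪d i, h⟫} with hS
  obtain ⟨h₀, hh₀⟩ : ∃ h : EuclideanSpace ℝ (Fin n), ‖h‖ = 1 := by
    refine ⟨EuclideanSpace.single ⟨0, hn⟩ 1, ?_⟩
    simp [EuclideanSpace.norm_single]
  have hSne : S.Nonempty := ⟨_, h₀, hh₀, rfl⟩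
  have hbdd : ∀ h : EuclideanSpace ℝ (Fin n),
      BddAbove (Set.range fun i => ⟪d i, h⟫) := fun h => (Set.finite_range _).bddAbove
  have hSbdd : BddBelow S := by
    refine ⟨-‖d ⟨0, hk⟩‖, ?_⟩
    rintro r ⟨h, hh, rfl⟩
    have h1 : ⟪d ⟨0, hk⟩, h⟫ ≤ ⨆ i, ⟪d i, h⟫ := le_ciSup (hbdd h) _
    have h2 : -‖d ⟨0, hk⟩‖ ≤ ⟪d ⟨0, hk⟩, h⟫ := by
      have := abs_real_inner_le_norm (d ⟨0, hk⟩) h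
      rw [hh, mul_one] at this
      linarith [neg_abs_le (⟪d ⟨0, hk⟩, h⟫)]
    linarith
  constructor
  · intro h0
    by_contra hc
    have hconv : Convex ℝ (convexHull ℝ (Set.range d)) := convex_convexHull ℝ _
    have hcl : IsClosed (convexHull ℝ (Set.range d)) :=
      ((Set.finite_range d).isCompact_convexHull (𝕜 := ℝ)).isClosed
    obtain ⟨f, u, hfu, hu0⟩ := geometric_hahn_banach_closed_point hconv hcl hc
    have hu : u < 0 := by simpa using hu0
    set v := (InnerProductSpace.toDual ℝ (EuclideanSpace ℝ (Fin n))).symm f with hv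
    have hfv : ∀ x, ⟪v, x⟫ = f x := fun x =>
      InnerProductSpace.toDual_symm_apply
    have hdlt : ∀ i, ⟪v, d i⟫ < u := fun i => by
      rw [hfv]
      exact hfu _ (subset_convexHull ℝ _ (Set.mem_range_self i))
    have hvne : v ≠ 0 := by
      intro hv0
      have := hdlt ⟨0, hk⟩
      rw [hv0] at this
      simp at this
      linarith
    have hvpos : 0 < ‖v‖ := norm_pos_iff.mpr hvne
    set h : EuclideanSpace ℝ (Fin n) := ‖v‖⁻¹ • v with hh
    have hnh : ‖h‖ = 1 := by
      rw [hh, norm_smul, norm_inv, norm_norm, inv_mul_cancel₀ hvpos.ne']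
    have hsup : (⨆ i, ⟪d i, h⟫) ≤ ‖v‖⁻¹ * u := by
      refine ciSup_le fun i => ?_
      rw [hh, real_inner_smul_right, real_inner_comm]
      have := (hdlt i).le
      have hpos : (0:ℝ) < ‖v‖⁻¹ := inv_pos.mpr hvpos
      nlinarith
    have hmem : (⨆ i, ⟪d i, h⟫) ∈ S := ⟨h, hnh, rfl⟩
    have := csInf_le hSbdd hmem
    have hneg : ‖v‖⁻¹ * u < 0 := mul_neg_of_pos_of_neg (inv_pos.mpr hvpos) hu
    linarith
  · intro hmem
    rw [convexHull_range_eq_exists_affineCombination] at hmem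
    obtain ⟨s, w, hw₀, hw₁, hsum⟩ := hmem
    refine le_csInf hSne ?_
    rintro r ⟨h, hh, rfl⟩
    by_contra hlt
    push_neg at hlt
    have hle : ∀ i ∈ s, ⟪d i, h⟫ ≤ ⨆ j, ⟪d j, h⟫ := fun i _ => le_ciSup (hbdd h) _
    have hz : (0 : EuclideanSpace ℝ (Fin n)) = ∑ i ∈ s, w i • d i := by
      rw [← hsum, Finset.affineCombination_eq_linear_combination s d w hw₁]
    have hinner : (0 : ℝ) = ∑ i ∈ s, w i * ⟪d i, h⟫ := by
      have := congrArg (fun x : EuclideanSpace ℝ (Fin n) => ⟪x, h⟫) hz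
      simpa only [inner_zero_left, sum_inner, real_inner_smul_left] using this
    have hbound : ∑ i ∈ s, w i * ⟪d i, h⟫ ≤ ∑ i ∈ s, w i * (⨆ j, ⟪d j, h⟫) := by
      refine Finset.sum_le_sum fun i hi => ?_
      exact mul_le_mul_of_nonneg_left (hle i hi) (hw₀ i hi)
    rw [← Finset.sum_mul, hw₁, one_mul] at hbound
    linarith
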